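/- The modular element intertwines the two modular automorphisms: δ·σ(a) = σ'(a)·δ for every a ∈ A. -/
import Mathlib


open TensorProduct HopfAlgebra

/-- The modular element intertwines the two modular automorphisms:
`δ σ(a) = σ'(a) δ` for all `a ∈ A`. -/
theorem modular_element_intertwines_modular_automorphisms
    {A : Type*} [Ring A] [HopfAlgebra ℂ A]
    (hS : Function.Bijective (antipode (R := ℂ) (A := A)))
    (φ : A →ₗ[ℂ] ℂ) (hφ0 : φ ≠ 0)
    (hφL : ∀ a : A,
      (TensorProduct.rid ℂ A) (LinearMap.lTensor A φ (Coalgebra.comul a)) = φ a • (1 : A))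
    (hφf1 : ∀ a : A, (∀ b : A, φ (a * b) = 0) → a = 0)
    (hφf2 : ∀ a : A, (∀ b : A, φ (b * a) = 0) → a = 0)
    (σ : A ≃ₐ[ℂ] A) (hσ : ∀ a b : A, φ (a * b) = φ (b * σ a))
    (hψR : ∀ a : A,
      (TensorProduct.lid ℂ A) (LinearMap.rTensor A (φ ∘ₗ antipode (R := ℂ))
        (Coalgebra.comul a)) = φ (antipode (R := ℂ) a) • (1 : A))
    (σ' : A ≃ₐ[ℂ] A)
    (hσ' : ∀ a b : A, φ (antipode (R := ℂ) (a * b)) = φ (antipode (R := ℂ) (b * σ' a)))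
    (δ : Aˣ)
    (hδΔ : Coalgebra.comul (R := ℂ) ((δ : A)) = (δ : A) ⊗ₜ[ℂ] (δ : A))
    (hδε : Coalgebra.counit (R := ℂ) ((δ : A)) = 1)
    (hδ : ∀ a : A, φ (antipode (R := ℂ) a) = φ (a * δ)) :
    ∀ a : A, (δ : A) * σ a = σ' a * (δ : A) := by
  intro a
  have key : ∀ b : A, φ (b * ((δ : A) * σ a - σ' a * (δ : A))) = 0 := by
    intro b
    have h1 : φ (antipode (R := ℂ) (a * b)) = φ (b * ((δ : A) * σ a)) := by
      rw [hδ, mul_assoc, hσ a ((b : A) * (δ : A)), mul_assoc]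
    have h2 : φ (antipode (R := ℂ) (a * b)) = φ (b * (σ' a * (δ : A))) := by
      rw [hσ', hδ, mul_assoc]
    rw [mul_sub, map_sub, ← h1, ← h2, sub_self]
  have h0 := hφf2 _ key
  exact sub_eq_zero.mp h0
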